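/- Let p = 2 and let f ∈ F^coord_{0,(L₁,L₂)}(ℝ^d). For ℓ ∈ {1,2}, let x₀ ∈ ℝ^d and x₁ = x₀ − (1/L_ℓ) U_ℓ ∇^{(ℓ)} f(x₀) (one exact-step partial gradient update on block ℓ). Then f(x₀) − f(x₁) ≥ (1/(2L_ℓ)) ( ‖∇^{(ℓ)} f(x₀)‖² + ‖∇^{(ℓ)} f(x₁)‖² ). -/

import Mathlib

open RealInnerProductSpace

noncomputable section

/-- The `ℓ`-th block `ℝ^{d_ℓ}` of the decomposition `ℝ^d = ℝ^{d_1} × … × ℝ^{d_p}`. -/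
abbrev Blk {p : ℕ} (d : Fin p → ℕ) (ℓ : Fin p) : Type := EuclideanSpace ℝ (Fin (d ℓ))

/-- The space `ℝ^d = ℝ^{d_1} × … × ℝ^{d_p}` with the Euclidean (ℓ²) norm. -/
abbrev Sp {p : ℕ} (d : Fin p → ℕ) : Type := PiLp 2 (Blk d)

/-- The selection embedding `U_ℓ : ℝ^{d_ℓ} → ℝ^d` placing `h` in block `ℓ` and `0` elsewhere. -/
def inj {p : ℕ} (d : Fin p → ℕ) (ℓ : Fin p) (h : Blk d ℓ) : Sp d :=
  (WithLp.equiv 2 (∀ ℓ, Blk d ℓ)).symm (Pi.single ℓ h)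

/-- Membership in the class `F^coord_{0,L}(ℝ^d)`: convex, differentiable, and for each block
`ℓ` the partial gradient `∇^{(ℓ)} f` is `L_ℓ`-Lipschitz along the block `ℓ`. -/
def IsCoordSmooth {p : ℕ} (d : Fin p → ℕ) (L : Fin p → ℝ) (f : Sp d → ℝ) : Prop :=
  ConvexOn ℝ Set.univ f ∧ Differentiable ℝ f ∧
    ∀ (ℓ : Fin p) (x : Sp d) (h : Blk d ℓ),
      ‖gradient f (x + inj d ℓ h) ℓ - gradient f x ℓ‖ ≤ L ℓ * ‖h‖

namespace CCDAux

variable {p : ℕ} {d : Fin p → ℕ}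

lemma inj_apply (ℓ : Fin p) (h : Blk d ℓ) (i : Fin p) :
    inj d ℓ h i = Pi.single ℓ h i := rfl

lemma inj_smul (ℓ : Fin p) (a : ℝ) (h : Blk d ℓ) :
    inj d ℓ (a • h) = a • inj d ℓ h := by
  ext i j
  simp [inj_apply, Pi.single_smul]

lemma inj_add (ℓ : Fin p) (h h' : Blk d ℓ) :
    inj d ℓ (h + h') = inj d ℓ h + inj d ℓ h' := by
  ext i j
  simp [inj_apply, Pi.single_add]

lemma inner_inj (ℓ : Fin p) (v : Sp d) (h : Blk d ℓ) :
    ⟪v, inj d ℓ h⟫ = ⟪v ℓ, h⟫ := by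
  rw [PiLp.inner_apply, Finset.sum_eq_single ℓ]
  · rw [inj_apply, Pi.single_eq_same]
  · intro i _ hi
    rw [inj_apply, Pi.single_eq_of_ne hi, inner_zero_right]
  · simp

lemma hasDerivAt_line (f : Sp d → ℝ) (hf : Differentiable ℝ f) (x v : Sp d) (t : ℝ) :
    HasDerivAt (fun s : ℝ => f (x + s • v)) ⟪gradient f (x + t • v), v⟫ t := by
  have h1 : HasDerivAt (fun s : ℝ => x + s • v) v t := by
    simpa using ((hasDerivAt_id t).smul_const v).const_add x
  have h2 : HasFDerivAt f (InnerProductSpace.toDual ℝ (Sp d) (gradient f (x + t • v)))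
      (x + t • v) := hasGradientAt_iff_hasFDerivAt.mp (hf _).hasGradientAt
  have h3 := h2.comp_hasDerivAt t h1
  simpa [InnerProductSpace.toDual_apply_apply, Function.comp_def] using h3

/-- Descent lemma along block ℓ. -/
lemma descent {L : Fin p → ℝ} (f : Sp d → ℝ) (hf : IsCoordSmooth d L f)
    (ℓ : Fin p) (x : Sp d) (h : Blk d ℓ) :
    f (x + inj d ℓ h) ≤ f x + ⟪gradient f x ℓ, h⟫ + L ℓ / 2 * ‖h‖ ^ 2 := by
  obtain ⟨hconv, hdiff, hlip⟩ := hf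
  set v := inj d ℓ h with hv
  set φ : ℝ → ℝ := fun t =>
    f (x + t • v) - t * ⟪gradient f x ℓ, h⟫ - L ℓ / 2 * t ^ 2 * ‖h‖ ^ 2 with hφ
  have hd : ∀ t : ℝ, HasDerivAt φ
      (⟪gradient f (x + t • v) ℓ - gradient f x ℓ, h⟫ - L ℓ * t * ‖h‖ ^ 2) t := by
    intro t
    have h1 := hasDerivAt_line f hdiff x v t
    have h2 : HasDerivAt (fun t : ℝ => t * ⟪gradient f x ℓ, h⟫)
        ⟪gradient f x ℓ, h⟫ t := by
      simpa using (hasDerivAt_id t).mul_const _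
    have h3 : HasDerivAt (fun t : ℝ => L ℓ / 2 * t ^ 2 * ‖h‖ ^ 2)
        (L ℓ * t * ‖h‖ ^ 2) t := by
      have := (((hasDerivAt_pow 2 t).const_mul (L ℓ / 2)).mul_const (‖h‖ ^ 2))
      refine this.congr_deriv ?_
      ring
    have h4 := (h1.sub h2).sub h3
    have he : ⟪gradient f (x + t • v), v⟫ - ⟪gradient f x ℓ, h⟫ - L ℓ * t * ‖h‖ ^ 2
        = ⟪gradient f (x + t • v) ℓ - gradient f x ℓ, h⟫ - L ℓ * t * ‖h‖ ^ 2 := by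
      rw [hv, inner_inj, inner_sub_left]
    exact he ▸ h4
  have hder : ∀ t ∈ Set.Ioo (0:ℝ) 1, deriv φ t ≤ 0 := by
    intro t ht
    rw [(hd t).deriv]
    have ht0 : 0 ≤ t := ht.1.le
    have key : x + t • v = x + inj d ℓ (t • h) := by rw [inj_smul]
    have hb := hlip ℓ x (t • h)
    rw [← key] at hb
    have h5 : ⟪gradient f (x + t • v) ℓ - gradient f x ℓ, h⟫ ≤
        ‖gradient f (x + t • v) ℓ - gradient f x ℓ‖ * ‖h‖ := real_inner_le_norm _ _
    have h6 : ‖t • h‖ = t * ‖h‖ := by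
      rw [norm_smul, Real.norm_eq_abs, abs_of_nonneg ht0]
    rw [h6] at hb
    have h7 : ⟪gradient f (x + t • v) ℓ - gradient f x ℓ, h⟫ ≤ L ℓ * t * ‖h‖ ^ 2 := by
      calc ⟪gradient f (x + t • v) ℓ - gradient f x ℓ, h⟫
          ≤ ‖gradient f (x + t • v) ℓ - gradient f x ℓ‖ * ‖h‖ := h5
        _ ≤ (L ℓ * (t * ‖h‖)) * ‖h‖ := mul_le_mul_of_nonneg_right hb (norm_nonneg h)
        _ = L ℓ * t * ‖h‖ ^ 2 := by ring
    linarith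
  have hanti : AntitoneOn φ (Set.Icc 0 1) := by
    apply antitoneOn_of_deriv_nonpos (convex_Icc 0 1)
    · exact Continuous.continuousOn
        (continuous_iff_continuousAt.mpr fun t => (hd t).continuousAt)
    · intro t _
      exact (hd t).differentiableAt.differentiableWithinAt
    · intro t ht
      rw [interior_Icc] at ht
      exact hder t ht
  have h01 := hanti (Set.left_mem_Icc.2 zero_le_one) (Set.right_mem_Icc.2 zero_le_one)
    zero_le_one
  simp only [hφ, one_smul, zero_smul, add_zero, one_mul, zero_mul, one_pow, sub_zero,
    mul_zero, zero_pow] at h01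
  simp only [hv] at h01
  linarith [h01]

/-- First-order condition for convexity. -/
lemma conv_lower (f : Sp d → ℝ) (hconv : ConvexOn ℝ Set.univ f)
    (hdiff : Differentiable ℝ f) (x y : Sp d) :
    f x + ⟪gradient f x, y - x⟫ ≤ f y := by
  set ψ : ℝ → ℝ := fun t => f (x + t • (y - x)) with hψ
  have hψc : ConvexOn ℝ Set.univ ψ := by
    have hc := hconv.comp_affineMap (AffineMap.lineMap x y : ℝ →ᵃ[ℝ] Sp d)
    have he : ψ = f ∘ (AffineMap.lineMap x y : ℝ →ᵃ[ℝ] Sp d) := by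
      funext t
      simp [hψ, AffineMap.lineMap_apply, vsub_eq_sub, vadd_eq_add, add_comm]
    rw [he]
    simpa using hc
  have hda := hasDerivAt_line f hdiff x (y - x) 0
  rw [show x + (0:ℝ) • (y - x) = x by simp] at hda
  have hsl := hψc.deriv_le_slope (Set.mem_univ (0:ℝ)) (Set.mem_univ (1:ℝ)) zero_lt_one
    hda.differentiableAt
  rw [hda.deriv, slope_def_field] at hsl
  have h1 : ψ 1 = f y := by simp [hψ]
  have h0 : ψ 0 = f x := by simp [hψ]
  rw [h1, h0] at hsl
  have : ⟪gradient f x, y - x⟫ ≤ f y - f x := by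
    simpa using hsl
  linarith

end CCDAux

open CCDAux in
theorem descent_lemma_two_block_ccd {d : Fin 2 → ℕ} (L : Fin 2 → ℝ)
    (hL : ∀ ℓ, 0 < L ℓ) (f : Sp d → ℝ) (hf : IsCoordSmooth d L f)
    (ℓ : Fin 2) (x₀ x₁ : Sp d)
    (hstep : x₁ = x₀ - (L ℓ)⁻¹ • inj d ℓ (gradient f x₀ ℓ)) :
    f x₀ - f x₁ ≥ 1 / (2 * L ℓ) * (‖gradient f x₀ ℓ‖ ^ 2 + ‖gradient f x₁ ℓ‖ ^ 2) := by
  obtain ⟨hconv, hdiff, hlip⟩ := hf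
  set a := L ℓ with ha
  have ha0 : 0 < a := hL ℓ
  set g₀ := gradient f x₀ ℓ with hg₀
  set g₁ := gradient f x₁ ℓ with hg₁
  set k : Blk d ℓ := g₀ - g₁ with hk
  set w : Sp d := x₀ + inj d ℓ ((-(a⁻¹)) • k) with hw
  -- descent lemma at x₀
  have hdes : f w ≤ f x₀ + ⟪g₀, (-(a⁻¹)) • k⟫ + a / 2 * ‖(-(a⁻¹)) • k‖ ^ 2 :=
    descent f ⟨hconv, hdiff, hlip⟩ ℓ x₀ ((-(a⁻¹)) • k)
  -- convexity at x₁
  have hcv : f x₁ + ⟪gradient f x₁, w - x₁⟫ ≤ f w := conv_lower f hconv hdiff x₁ w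
  have hwx : w - x₁ = inj d ℓ (a⁻¹ • g₁) := by
    have e2 : (a⁻¹ : ℝ) • g₁ = (-(a⁻¹)) • k + a⁻¹ • g₀ := by
      rw [hk]; module
    rw [hw, hstep, e2, inj_add, inj_smul, inj_smul]
    abel
  have hinner1 : ⟪gradient f x₁, w - x₁⟫ = a⁻¹ * ‖g₁‖ ^ 2 := by
    rw [hwx, inner_inj, ← hg₁, real_inner_smul_right, real_inner_self_eq_norm_sq]
  have hinner2 : ⟪g₀, (-(a⁻¹)) • k⟫ = -(a⁻¹) * (‖g₀‖ ^ 2 - ⟪g₀, g₁⟫) := by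
    rw [real_inner_smul_right, hk, inner_sub_right, real_inner_self_eq_norm_sq]
    try ring
  have hnk : ‖(-(a⁻¹)) • k‖ ^ 2 = a⁻¹ ^ 2 * (‖g₀‖ ^ 2 - 2 * ⟪g₀, g₁⟫ + ‖g₁‖ ^ 2) := by
    rw [norm_smul, Real.norm_eq_abs, abs_neg, abs_of_nonneg (inv_nonneg.2 ha0.le), mul_pow,
      hk, norm_sub_sq_real]
    try ring
  rw [hinner1] at hcv
  rw [hinner2, hnk] at hdes
  have hab : a * a⁻¹ = 1 := mul_inv_cancel₀ ha0.ne'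
  have h2a : 1 / (2 * a) = a⁻¹ / 2 := by
    field_simp
  have hsimp : a / 2 * (a⁻¹ ^ 2 * (‖g₀‖ ^ 2 - 2 * ⟪g₀, g₁⟫ + ‖g₁‖ ^ 2))
      = a⁻¹ / 2 * (‖g₀‖ ^ 2 - 2 * ⟪g₀, g₁⟫ + ‖g₁‖ ^ 2) := by
    field_simp
  rw [h2a]
  rw [hsimp] at hdes
  linarith
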